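/- Let H be a finitely generated projective Hopf k-algebra with Frobenius homomorphism ψ and Nakayama automorphism ν, and let m := ε ∘ ν be the left modular function. Then ν(a) = S̄²(m ⇀ a) = m ⇀ S̄²(a) for all a ∈ H, where S̄ is the inverse of the antipode and m ⇀ a = Σ a₍₁₎ m(a₍₂₎). -/

import Mathlib

open scoped TensorProduct

namespace NakayamaProofAux

open TensorProduct Coalgebra HopfAlgebra LinearMap

variable {k H : Type*} [CommRing k] [Ring H] [HopfAlgebra k H]

/-! ### Convolution algebra -/

/-- Convolution of two linear maps `H →ₗ[k] B` on a coalgebra `H` with values in an algebra. -/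
noncomputable def conv {B : Type*} [Ring B] [Algebra k B] (f g : H →ₗ[k] B) : H →ₗ[k] B :=
  LinearMap.mul' k B ∘ₗ TensorProduct.map f g ∘ₗ (Coalgebra.comul (R := k) (A := H))

/-- The convolution unit. -/
noncomputable def cunit (B : Type*) [Ring B] [Algebra k B] : H →ₗ[k] B :=
  Algebra.linearMap k B ∘ₗ Coalgebra.counit

lemma cunit_apply (B : Type*) [Ring B] [Algebra k B] (a : H) :
    cunit (k := k) B a = algebraMap k B (Coalgebra.counit (R := k) a) := rfl

lemma conv_apply {B : Type*} [Ring B] [Algebra k B] (f g : H →ₗ[k] B) {a : H}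
    (r : Coalgebra.Repr k a (H × H)) :
    conv f g a = ∑ i ∈ r.index, f (r.left i) * g (r.right i) := by
  simp only [conv, LinearMap.comp_apply, ← r.eq, map_sum, TensorProduct.map_tmul,
    LinearMap.mul'_apply]

lemma repr_sum_counit_smul_right {a : H} (r : Coalgebra.Repr k a (H × H)) :
    ∑ i ∈ r.index, Coalgebra.counit (R := k) (r.left i) • r.right i = a := by
  have h := congrArg (TensorProduct.lid k H) (Coalgebra.sum_counit_tmul_eq (R := k) r)
  rw [map_sum] at h
  simp only [TensorProduct.lid_tmul, one_smul] at h
  exact h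

lemma repr_sum_smul_counit_left {a : H} (r : Coalgebra.Repr k a (H × H)) :
    ∑ i ∈ r.index, Coalgebra.counit (R := k) (r.right i) • r.left i = a := by
  have h := congrArg (TensorProduct.rid k H) (Coalgebra.sum_tmul_counit_eq (R := k) r)
  rw [map_sum] at h
  simp only [TensorProduct.rid_tmul, one_smul] at h
  exact h

lemma cunit_conv {B : Type*} [Ring B] [Algebra k B] (f : H →ₗ[k] B) :
    conv (cunit B) f = f := by
  ext a
  rw [conv_apply _ _ (ℛ k a)]
  calc ∑ i ∈ (ℛ k a).index, cunit (k := k) B ((ℛ k a).left i) * f ((ℛ k a).right i)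
      = ∑ i ∈ (ℛ k a).index, f (Coalgebra.counit (R := k) ((ℛ k a).left i) • (ℛ k a).right i) := by
        refine Finset.sum_congr rfl fun i _ => ?_
        rw [cunit_apply, ← Algebra.smul_def, map_smul]
    _ = f a := by rw [← map_sum, repr_sum_counit_smul_right]

lemma conv_cunit {B : Type*} [Ring B] [Algebra k B] (f : H →ₗ[k] B) :
    conv f (cunit B) = f := by
  ext a
  rw [conv_apply _ _ (ℛ k a)]
  calc ∑ i ∈ (ℛ k a).index, f ((ℛ k a).left i) * cunit (k := k) B ((ℛ k a).right i)
      = ∑ i ∈ (ℛ k a).index, f (Coalgebra.counit (R := k) ((ℛ k a).right i) • (ℛ k a).left i) := by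
        refine Finset.sum_congr rfl fun i _ => ?_
        rw [cunit_apply, ← Algebra.commutes, ← Algebra.smul_def, map_smul]
    _ = f a := by rw [← map_sum, repr_sum_smul_counit_left]

lemma conv_assoc {B : Type*} [Ring B] [Algebra k B] (f g h : H →ₗ[k] B) :
    conv (conv f g) h = conv f (conv g h) := by
  ext a
  classical
  have key := Coalgebra.sum_tmul_tmul_eq (R := k) (ℛ k a)
    (fun i => ℛ k ((ℛ k a).left i)) (fun i => ℛ k ((ℛ k a).right i))
  apply_fun (LinearMap.mul' k B ∘ₗ
    TensorProduct.map f (LinearMap.mul' k B ∘ₗ TensorProduct.map g h)) at key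
  simp only [map_sum, LinearMap.comp_apply, TensorProduct.map_tmul,
    LinearMap.mul'_apply] at key
  rw [conv_apply (conv f g) h (ℛ k a), conv_apply f (conv g h) (ℛ k a)]
  calc ∑ i ∈ (ℛ k a).index, conv f g ((ℛ k a).left i) * h ((ℛ k a).right i)
      = ∑ i ∈ (ℛ k a).index, ∑ j ∈ (ℛ k ((ℛ k a).left i)).index,
          f ((ℛ k ((ℛ k a).left i)).left j) *
            (g ((ℛ k ((ℛ k a).left i)).right j) * h ((ℛ k a).right i)) := by
        refine Finset.sum_congr rfl fun i _ => ?_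
        rw [conv_apply f g (ℛ k ((ℛ k a).left i)), Finset.sum_mul]
        simp [mul_assoc]
    _ = ∑ i ∈ (ℛ k a).index, ∑ j ∈ (ℛ k ((ℛ k a).right i)).index,
          f ((ℛ k a).left i) *
            (g ((ℛ k ((ℛ k a).right i)).left j) * h ((ℛ k ((ℛ k a).right i)).right j)) := key
    _ = ∑ i ∈ (ℛ k a).index, f ((ℛ k a).left i) * conv g h ((ℛ k a).right i) := by
        refine Finset.sum_congr rfl fun i _ => ?_
        rw [conv_apply g h (ℛ k ((ℛ k a).right i)), Finset.mul_sum]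

lemma conv_unique {B : Type*} [Ring B] [Algebra k B] {x y z : H →ₗ[k] B}
    (h1 : conv x y = cunit B) (h2 : conv y z = cunit B) : x = z := by
  have h3 := conv_assoc x y z
  rw [h1, cunit_conv] at h3
  rw [h3, h2, conv_cunit]

lemma conv_antipode_id :
    conv (HopfAlgebra.antipode (R := k) (A := H)) LinearMap.id = cunit H := by
  ext a
  rw [conv_apply _ _ (ℛ k a)]
  simpa [cunit_apply] using HopfAlgebra.sum_antipode_mul_eq_algebraMap_counit (R := k) (ℛ k a)

lemma conv_id_antipode :
    conv LinearMap.id (HopfAlgebra.antipode (R := k) (A := H)) = cunit H := by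
  ext a
  rw [conv_apply _ _ (ℛ k a)]
  simpa [cunit_apply] using HopfAlgebra.sum_mul_antipode_eq_algebraMap_counit (R := k) (ℛ k a)

/-! ### counit and antipode -/

lemma counit_antipode (a : H) :
    Coalgebra.counit (R := k) (HopfAlgebra.antipode (R := k) a) = Coalgebra.counit (R := k) a := by
  have h := congrArg (Coalgebra.counit (R := k) (A := H)) (sum_antipode_mul_eq_algebraMap_counit (R := k) (ℛ k a))
  rw [map_sum, Bialgebra.counit_algebraMap] at h
  simp only [Bialgebra.counit_mul] at h
  have h2 : Coalgebra.counit (R := k) (HopfAlgebra.antipode (R := k) a)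
      = ∑ i ∈ (ℛ k a).index,
          Coalgebra.counit (R := k) (HopfAlgebra.antipode (R := k) ((ℛ k a).left i)) *
            Coalgebra.counit (R := k) ((ℛ k a).right i) := by
    conv_lhs => rw [← repr_sum_smul_counit_left (ℛ k a)]
    rw [map_sum, map_sum]
    refine Finset.sum_congr rfl fun i _ => ?_
    rw [map_smul, map_smul, smul_eq_mul, mul_comm]
  rw [h2, h]

/-! ### The antipode is an anti-coalgebra morphism -/

/-- The twisted comultiplication `a ↦ Σ S(a₂) ⊗ S(a₁)`. -/
noncomputable def fS2 : H →ₗ[k] H ⊗[k] H :=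
  TensorProduct.map (HopfAlgebra.antipode (R := k)) (HopfAlgebra.antipode (R := k)) ∘ₗ
    (TensorProduct.comm k H H).toLinearMap ∘ₗ Coalgebra.comul

lemma fS2_apply {a : H} (r : Coalgebra.Repr k a (H × H)) :
    fS2 (k := k) (H := H) a
      = ∑ i ∈ r.index, HopfAlgebra.antipode (R := k) (r.right i) ⊗ₜ[k]
          HopfAlgebra.antipode (R := k) (r.left i) := by
  simp [fS2, ← r.eq, map_sum]

lemma conv_comul_comulS :
    conv (Coalgebra.comul (R := k) (A := H))
      (Coalgebra.comul (R := k) (A := H) ∘ₗ HopfAlgebra.antipode (R := k)) = cunit (H ⊗[k] H) := by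
  ext a
  rw [conv_apply _ _ (ℛ k a)]
  calc ∑ i ∈ (ℛ k a).index,
        Coalgebra.comul (R := k) ((ℛ k a).left i) *
          (Coalgebra.comul (R := k) ∘ₗ HopfAlgebra.antipode (R := k)) ((ℛ k a).right i)
      = Coalgebra.comul (R := k)
          (∑ i ∈ (ℛ k a).index, (ℛ k a).left i * HopfAlgebra.antipode (R := k) ((ℛ k a).right i)) := by
        rw [map_sum]
        exact Finset.sum_congr rfl fun i _ => (Bialgebra.comul_mul _ _).symm
    _ = cunit (k := k) (H ⊗[k] H) a := by
        rw [HopfAlgebra.sum_mul_antipode_eq_algebraMap_counit, Bialgebra.comul_algebraMap, cunit_apply]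

lemma conv_fS2_comul :
    conv (fS2 (k := k) (H := H)) (Coalgebra.comul (R := k) (A := H)) = cunit (H ⊗[k] H) := by
  classical
  ext a
  set r := ℛ k a with hrdef
  set r₁ : (i : r.ι) → Coalgebra.Repr k (r.left i) (H × H) := fun i => ℛ k (r.left i) with hr1
  set r₂ : (i : r.ι) → Coalgebra.Repr k (r.right i) (H × H) := fun i => ℛ k (r.right i) with hr2
  set Φ : H ⊗[k] (H ⊗[k] H) →ₗ[k] H ⊗[k] H :=
    LinearMap.mul' k (H ⊗[k] H) ∘ₗ
      TensorProduct.map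
        (TensorProduct.map (HopfAlgebra.antipode (R := k)) (HopfAlgebra.antipode (R := k)) ∘ₗ
          (TensorProduct.comm k H H).toLinearMap)
        (Coalgebra.comul (R := k)) ∘ₗ
      (TensorProduct.assoc k H H H).symm.toLinearMap with hΦdef
  have hΦ : ∀ u v w : H, Φ (u ⊗ₜ[k] (v ⊗ₜ[k] w))
      = (HopfAlgebra.antipode (R := k) v ⊗ₜ[k] HopfAlgebra.antipode (R := k) u) *
          Coalgebra.comul (R := k) w := by
    intro u v w
    simp [hΦdef]
  have key := congrArg Φ (Coalgebra.sum_tmul_tmul_eq r r₁ r₂)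
  simp only [map_sum, hΦ] at key
  have lhs_eq : conv (fS2 (k := k) (H := H)) (Coalgebra.comul (R := k) (A := H)) a
      = ∑ i ∈ r.index, ∑ j ∈ (r₁ i).index,
          (HopfAlgebra.antipode (R := k) ((r₁ i).right j) ⊗ₜ[k]
            HopfAlgebra.antipode (R := k) ((r₁ i).left j)) * Coalgebra.comul (R := k) (r.right i) := by
    rw [conv_apply _ _ r]
    refine Finset.sum_congr rfl fun i _ => ?_
    rw [fS2_apply (r₁ i), Finset.sum_mul]
  rw [lhs_eq, key]
  have inner : ∀ i ∈ r.index,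
      (∑ j ∈ (r₂ i).index,
        (HopfAlgebra.antipode (R := k) ((r₂ i).left j) ⊗ₜ[k]
          HopfAlgebra.antipode (R := k) (r.left i)) * Coalgebra.comul (R := k) ((r₂ i).right j))
      = (1 : H) ⊗ₜ[k] (HopfAlgebra.antipode (R := k) (r.left i) * r.right i) := by
    intro i _
    set s := r₂ i with hsdef
    set s₁ : (j : s.ι) → Coalgebra.Repr k (s.left j) (H × H) := fun j => ℛ k (s.left j) with hs1
    set s₂ : (j : s.ι) → Coalgebra.Repr k (s.right j) (H × H) := fun j => ℛ k (s.right j) with hs2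
    set Ψ : H ⊗[k] (H ⊗[k] H) →ₗ[k] H ⊗[k] H :=
      TensorProduct.map (LinearMap.mul' k H ∘ₗ (HopfAlgebra.antipode (R := k)).rTensor H)
          (LinearMap.mulLeft k (HopfAlgebra.antipode (R := k) (r.left i))) ∘ₗ
        (TensorProduct.assoc k H H H).symm.toLinearMap with hΨdef
    have hΨ : ∀ u v w : H, Ψ (u ⊗ₜ[k] (v ⊗ₜ[k] w))
        = (HopfAlgebra.antipode (R := k) u * v) ⊗ₜ[k]
            (HopfAlgebra.antipode (R := k) (r.left i) * w) := by
      intro u v w; simp [hΨdef]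
    have key3 := congrArg Ψ (Coalgebra.sum_tmul_tmul_eq s s₁ s₂)
    simp only [map_sum, hΨ] at key3
    calc ∑ j ∈ s.index,
          (HopfAlgebra.antipode (R := k) (s.left j) ⊗ₜ[k]
            HopfAlgebra.antipode (R := k) (r.left i)) * Coalgebra.comul (R := k) (s.right j)
        = ∑ j ∈ s.index, ∑ m ∈ (s₂ j).index,
            (HopfAlgebra.antipode (R := k) (s.left j) * (s₂ j).left m) ⊗ₜ[k]
              (HopfAlgebra.antipode (R := k) (r.left i) * (s₂ j).right m) := by
          refine Finset.sum_congr rfl fun j _ => ?_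
          rw [← (s₂ j).eq, Finset.mul_sum]
          exact Finset.sum_congr rfl fun m _ => Algebra.TensorProduct.tmul_mul_tmul _ _ _ _
      _ = ∑ j ∈ s.index, ∑ j' ∈ (s₁ j).index,
            (HopfAlgebra.antipode (R := k) ((s₁ j).left j') * (s₁ j).right j') ⊗ₜ[k]
              (HopfAlgebra.antipode (R := k) (r.left i) * s.right j) := key3.symm
      _ = ∑ j ∈ s.index,
            (Coalgebra.counit (R := k) (s.left j) • (1 : H)) ⊗ₜ[k]
              (HopfAlgebra.antipode (R := k) (r.left i) * s.right j) := by
          refine Finset.sum_congr rfl fun j _ => ?_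
          rw [← TensorProduct.sum_tmul, HopfAlgebra.sum_antipode_mul_eq_smul (s₁ j)]
      _ = (1 : H) ⊗ₜ[k] (HopfAlgebra.antipode (R := k) (r.left i) * r.right i) := by
          have hterm : ∀ j ∈ s.index,
              (Coalgebra.counit (R := k) (s.left j) • (1 : H)) ⊗ₜ[k]
                (HopfAlgebra.antipode (R := k) (r.left i) * s.right j)
              = (1 : H) ⊗ₜ[k]
                  (HopfAlgebra.antipode (R := k) (r.left i) *
                    (Coalgebra.counit (R := k) (s.left j) • s.right j)) := by
            intro j _
            rw [TensorProduct.smul_tmul, mul_smul_comm]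
          rw [Finset.sum_congr rfl hterm, ← TensorProduct.tmul_sum, ← Finset.mul_sum,
            repr_sum_counit_smul_right s]
  rw [Finset.sum_congr rfl inner, ← TensorProduct.tmul_sum, HopfAlgebra.sum_antipode_mul_eq_algebraMap_counit r,
    cunit_apply]
  rw [Algebra.TensorProduct.algebraMap_apply, Algebra.algebraMap_eq_smul_one,
    TensorProduct.smul_tmul]

lemma comul_antipode_comp :
    (Coalgebra.comul (R := k) (A := H) ∘ₗ HopfAlgebra.antipode (R := k)) = fS2 (k := k) (H := H) :=
  (conv_unique (conv_fS2_comul (k := k) (H := H)) (conv_comul_comulS (k := k) (H := H))).symm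

lemma comul_antipode {a : H} (r : Coalgebra.Repr k a (H × H)) :
    Coalgebra.comul (R := k) (HopfAlgebra.antipode (R := k) a)
      = ∑ i ∈ r.index, HopfAlgebra.antipode (R := k) (r.right i) ⊗ₜ[k]
          HopfAlgebra.antipode (R := k) (r.left i) := by
  have h := LinearMap.congr_fun (comul_antipode_comp (k := k) (H := H)) a
  rw [LinearMap.comp_apply] at h
  rw [h, fS2_apply r]

/-! ### The inverse of the antipode -/

section Sb

variable (Sb' : H →ₗ[k] H)
variable (hS1 : ∀ x : H, HopfAlgebra.antipode (R := k) (Sb' x) = x)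
variable (hS2 : ∀ x : H, Sb' (HopfAlgebra.antipode (R := k) x) = x)

include hS1 hS2 in
lemma comul_Sb {a : H} (r : Coalgebra.Repr k a (H × H)) :
    Coalgebra.comul (R := k) (Sb' a) = ∑ i ∈ r.index, Sb' (r.right i) ⊗ₜ[k] Sb' (r.left i) := by
  have hcomp : ∀ b : H, Coalgebra.comul (R := k) (Sb' b)
      = TensorProduct.map Sb' Sb' ((TensorProduct.comm k H H) (Coalgebra.comul (R := k) b)) := by
    intro b
    obtain ⟨c, rfl⟩ : ∃ c, HopfAlgebra.antipode (R := k) c = b := ⟨Sb' b, hS1 b⟩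
    rw [hS2, comul_antipode (ℛ k c)]
    simp only [map_sum, TensorProduct.comm_tmul, TensorProduct.map_tmul, hS2]
    exact (ℛ k c).eq.symm
  rw [hcomp a, ← r.eq, map_sum, map_sum]
  simp only [TensorProduct.comm_tmul, TensorProduct.map_tmul]

include hS1 hS2 in
lemma counit_Sb (a : H) :
    Coalgebra.counit (R := k) (Sb' a) = Coalgebra.counit (R := k) a := by
  conv_rhs => rw [← hS1 a, counit_antipode]

include hS1 hS2 in
lemma sum_Sb_mul {a : H} (r : Coalgebra.Repr k a (H × H)) :
    ∑ i ∈ r.index, Sb' (r.right i) * r.left i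
      = algebraMap k H (Coalgebra.counit (R := k) a) := by
  have h0 := HopfAlgebra.sum_mul_antipode_eq_algebraMap_counit (R := k)
    (⟨r.index, fun i => Sb' (r.right i), fun i => Sb' (r.left i),
      (comul_Sb Sb' hS1 hS2 r).symm⟩ : Coalgebra.Repr k (Sb' a) (H × H))
  have h : ∑ i ∈ r.index, Sb' (r.right i) * HopfAlgebra.antipode (R := k) (Sb' (r.left i))
      = algebraMap k H (Coalgebra.counit (R := k) (Sb' a)) := h0
  simp only [hS1] at h
  rwa [counit_Sb Sb' hS1 hS2] at h

end Sb

/-! ### The modular function -/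

section Modular

variable (ν : H ≃ₐ[k] H)

/-- The left modular function. -/
noncomputable def mf : H →ₗ[k] k := Coalgebra.counit ∘ₗ ν.toLinearMap

lemma mf_apply (a : H) : mf ν a = Coalgebra.counit (R := k) (ν a) := rfl

lemma mf_mul (x y : H) : mf ν (x * y) = mf ν x * mf ν y := by
  simp [mf_apply, map_mul, Bialgebra.counit_mul]

lemma mf_algebraMap (c : k) : mf ν (algebraMap k H c) = c := by
  simp [mf_apply, AlgEquiv.commutes]

variable (Sb' : H →ₗ[k] H)
variable (hS1 : ∀ x : H, HopfAlgebra.antipode (R := k) (Sb' x) = x)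
variable (hS2 : ∀ x : H, Sb' (HopfAlgebra.antipode (R := k) x) = x)

lemma conv_mS_m :
    conv (mf ν ∘ₗ HopfAlgebra.antipode (R := k)) (mf ν) = cunit k := by
  ext a
  rw [conv_apply _ _ (ℛ k a)]
  have : ∑ i ∈ (ℛ k a).index,
      (mf ν ∘ₗ HopfAlgebra.antipode (R := k)) ((ℛ k a).left i) * mf ν ((ℛ k a).right i)
      = mf ν (∑ i ∈ (ℛ k a).index,
          HopfAlgebra.antipode (R := k) ((ℛ k a).left i) * (ℛ k a).right i) := by
    rw [map_sum]
    exact Finset.sum_congr rfl fun i _ => by rw [LinearMap.comp_apply, ← mf_mul]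
  rw [this, HopfAlgebra.sum_antipode_mul_eq_algebraMap_counit, mf_algebraMap, cunit_apply]
  simp

include hS1 hS2 in
lemma conv_m_mSb :
    conv (mf ν) (mf ν ∘ₗ Sb') = cunit k := by
  ext a
  rw [conv_apply _ _ (ℛ k a)]
  have : ∑ i ∈ (ℛ k a).index, mf ν ((ℛ k a).left i) * (mf ν ∘ₗ Sb') ((ℛ k a).right i)
      = mf ν (∑ i ∈ (ℛ k a).index, Sb' ((ℛ k a).right i) * (ℛ k a).left i) := by
    rw [map_sum]
    refine Finset.sum_congr rfl fun i _ => ?_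
    rw [LinearMap.comp_apply, mul_comm, ← mf_mul]
  rw [this, sum_Sb_mul Sb' hS1 hS2, mf_algebraMap, cunit_apply]
  simp

include hS1 hS2 in
lemma m_SbSb (x : H) : mf ν (Sb' (Sb' x)) = mf ν x := by
  have heq : mf ν ∘ₗ HopfAlgebra.antipode (R := k) = mf ν ∘ₗ Sb' :=
    conv_unique (conv_mS_m ν) (conv_m_mSb ν Sb' hS1 hS2)
  have h := LinearMap.congr_fun heq (Sb' x)
  simp only [LinearMap.comp_apply, hS1] at h
  exact h.symm

end Modular

/-! ### Identities for the Frobenius homomorphism -/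

section Frobenius

variable {P : Type*} [AddCommGroup P] [Module k P]
variable (ψ : H →ₗ[k] P)
variable (hint : ∀ a : H, (LinearMap.lTensor H ψ) (Coalgebra.comul (R := k) a) = 1 ⊗ₜ[k] ψ a)

include hint in
lemma R_id (x a : H) (rx : Coalgebra.Repr k x (H × H)) (ra : Coalgebra.Repr k a (H × H)) :
    ∑ j ∈ ra.index, ra.left j ⊗ₜ[k] ψ (x * ra.right j)
      = ∑ i ∈ rx.index, HopfAlgebra.antipode (R := k) (rx.left i) ⊗ₜ[k] ψ (rx.right i * a) := by
  classical
  set rl : (i : rx.ι) → Coalgebra.Repr k (rx.left i) (H × H) := fun i => ℛ k (rx.left i) with hrl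
  set rr : (i : rx.ι) → Coalgebra.Repr k (rx.right i) (H × H) := fun i => ℛ k (rx.right i) with hrr
  set Ξ : H ⊗[k] H →ₗ[k] H ⊗[k] P :=
    TensorProduct.map (LinearMap.mul' k H) (ψ ∘ₗ LinearMap.mul' k H) ∘ₗ
      (TensorProduct.tensorTensorTensorComm k H H H H).toLinearMap ∘ₗ
      (TensorProduct.mk k (H ⊗[k] H) (H ⊗[k] H)).flip (Coalgebra.comul (R := k) a) with hΞdef
  have hΞ : ∀ h w : H, Ξ (h ⊗ₜ[k] w)
      = ∑ m ∈ ra.index, (h * ra.left m) ⊗ₜ[k] ψ (w * ra.right m) := by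
    intro h w
    simp only [hΞdef, LinearMap.comp_apply, LinearMap.flip_apply, TensorProduct.mk_apply,
      LinearEquiv.coe_coe]
    rw [← ra.eq, TensorProduct.tmul_sum, map_sum, map_sum]
    simp [TensorProduct.tensorTensorTensorComm_tmul]
  set Φ : H ⊗[k] (H ⊗[k] H) →ₗ[k] H ⊗[k] P :=
    Ξ ∘ₗ (LinearMap.mul' k H ∘ₗ (HopfAlgebra.antipode (R := k)).rTensor H).rTensor H ∘ₗ
      (TensorProduct.assoc k H H H).symm.toLinearMap with hΦdef
  have hΦ : ∀ u v w : H, Φ (u ⊗ₜ[k] (v ⊗ₜ[k] w))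
      = Ξ ((HopfAlgebra.antipode (R := k) u * v) ⊗ₜ[k] w) := by
    intro u v w; simp [hΦdef]
  have rhs_eq : ∑ i ∈ rx.index,
      HopfAlgebra.antipode (R := k) (rx.left i) ⊗ₜ[k] ψ (rx.right i * a)
      = ∑ i ∈ rx.index, ∑ j ∈ (rr i).index,
          Φ (rx.left i ⊗ₜ[k] ((rr i).left j ⊗ₜ[k] (rr i).right j)) := by
    refine Finset.sum_congr rfl fun i _ => ?_
    have h1 : (LinearMap.rTensor P (LinearMap.mulLeft k (HopfAlgebra.antipode (R := k) (rx.left i))))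
        ((LinearMap.lTensor H ψ) (Coalgebra.comul (R := k) (rx.right i * a)))
        = HopfAlgebra.antipode (R := k) (rx.left i) ⊗ₜ[k] ψ (rx.right i * a) := by
      rw [hint]; simp
    rw [← h1, Bialgebra.comul_mul, ← (rr i).eq, ← ra.eq, Finset.sum_mul_sum]
    simp only [Algebra.TensorProduct.tmul_mul_tmul, map_sum, LinearMap.lTensor_tmul,
      LinearMap.rTensor_tmul, LinearMap.mulLeft_apply, hΦ, hΞ]
    refine Finset.sum_congr rfl fun j _ => Finset.sum_congr rfl fun m _ => ?_
    rw [mul_assoc]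
  have key := congrArg Φ (Coalgebra.sum_tmul_tmul_eq rx rl rr)
  simp only [map_sum] at key
  rw [rhs_eq, ← key]
  have collapse : ∀ i ∈ rx.index,
      (∑ j ∈ (rl i).index, Φ ((rl i).left j ⊗ₜ[k] ((rl i).right j ⊗ₜ[k] rx.right i)))
      = Coalgebra.counit (R := k) (rx.left i) • Ξ ((1 : H) ⊗ₜ[k] rx.right i) := by
    intro i _
    simp only [hΦ]
    calc ∑ j ∈ (rl i).index,
          Ξ ((HopfAlgebra.antipode (R := k) ((rl i).left j) * (rl i).right j) ⊗ₜ[k] rx.right i)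
        = Ξ ((∑ j ∈ (rl i).index,
            HopfAlgebra.antipode (R := k) ((rl i).left j) * (rl i).right j) ⊗ₜ[k] rx.right i) := by
          rw [TensorProduct.sum_tmul, map_sum]
      _ = Ξ ((Coalgebra.counit (R := k) (rx.left i) • (1 : H)) ⊗ₜ[k] rx.right i) := by
          rw [HopfAlgebra.sum_antipode_mul_eq_smul (rl i)]
      _ = Coalgebra.counit (R := k) (rx.left i) • Ξ ((1 : H) ⊗ₜ[k] rx.right i) := by
          rw [← TensorProduct.smul_tmul', map_smul]
  rw [Finset.sum_congr rfl collapse]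
  have hfinal : ∑ i ∈ rx.index,
      Coalgebra.counit (R := k) (rx.left i) • Ξ ((1 : H) ⊗ₜ[k] rx.right i)
      = Ξ ((1 : H) ⊗ₜ[k] x) := by
    conv_rhs => rw [← repr_sum_counit_smul_right rx]
    rw [TensorProduct.tmul_sum, map_sum]
    exact Finset.sum_congr rfl fun i _ => by rw [TensorProduct.tmul_smul, map_smul]
  rw [hfinal, hΞ]
  simp

variable (Sb' : H →ₗ[k] H)
variable (hS1 : ∀ x : H, HopfAlgebra.antipode (R := k) (Sb' x) = x)
variable (hS2 : ∀ x : H, Sb' (HopfAlgebra.antipode (R := k) x) = x)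

include hint hS2 in
lemma C_id (x a : H) (rx : Coalgebra.Repr k x (H × H)) (ra : Coalgebra.Repr k a (H × H)) :
    ∑ j ∈ ra.index, Sb' (ra.left j) ⊗ₜ[k] ψ (x * ra.right j)
      = ∑ i ∈ rx.index, rx.left i ⊗ₜ[k] ψ (rx.right i * a) := by
  have h := congrArg (LinearMap.rTensor P Sb') (R_id ψ hint x a rx ra)
  simp only [map_sum, LinearMap.rTensor_tmul, hS2] at h
  exact h

include hint in
lemma A_id (ν : H ≃ₐ[k] H) (hν : ∀ x a : H, ψ (x * a) = ψ (ν a * x)) (x a : H)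
    (rx : Coalgebra.Repr k x (H × H)) (rn : Coalgebra.Repr k (ν a) (H × H)) :
    ∑ i ∈ rx.index, rx.left i ⊗ₜ[k] ψ (rx.right i * a)
      = ∑ m ∈ rn.index, HopfAlgebra.antipode (R := k) (rn.left m) ⊗ₜ[k] ψ (rn.right m * x) := by
  have h := R_id ψ hint (ν a) x rn rx
  rw [← h]
  exact Finset.sum_congr rfl fun j _ => by rw [hν (rx.right j) a]

variable [Module.Finite k H] [Module.Projective k H]

include hint in
lemma injective_step (hFrob : Function.Bijective fun a : H => ψ ∘ₗ LinearMap.mulRight k a)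
    (ν : H ≃ₐ[k] H) (hν : ∀ x a : H, ψ (x * a) = ψ (ν a * x))
    {t₁ t₂ : H ⊗[k] H}
    (h : ∀ x : H, (LinearMap.lTensor H (ψ ∘ₗ LinearMap.mulRight k x)) t₁
        = (LinearMap.lTensor H (ψ ∘ₗ LinearMap.mulRight k x)) t₂) :
    t₁ = t₂ := by
  classical
  set β : H →ₗ[k] (H →ₗ[k] P) := LinearMap.llcomp k H H P ψ ∘ₗ LinearMap.mul k H with hβdef
  have hβ : ∀ b x : H, β b x = ψ (b * x) := fun b x => rfl
  have hβinj : Function.Injective β := by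
    intro b c hbc
    have h1 : (fun a : H => ψ ∘ₗ LinearMap.mulRight k a) (ν.symm b)
        = (fun a : H => ψ ∘ₗ LinearMap.mulRight k a) (ν.symm c) := by
      ext x
      simp only [LinearMap.comp_apply, LinearMap.mulRight_apply]
      rw [hν x (ν.symm b), hν x (ν.symm c), AlgEquiv.apply_symm_apply,
        AlgEquiv.apply_symm_apply]
      have := LinearMap.congr_fun hbc x
      rw [hβ, hβ] at this
      exact this
    have h2 := hFrob.injective h1
    exact ν.symm.injective h2
  suffices hu : (LinearMap.lTensor H β) t₁ = (LinearMap.lTensor H β) t₂ by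
    exact Module.Flat.lTensor_preserves_injective_linearMap (M := H) β hβinj hu
  obtain ⟨n, p, hp⟩ := Module.Finite.exists_fin' k H
  obtain ⟨σ, hσ⟩ := Module.projective_lifting_property p LinearMap.id hp
  set D : (H →ₗ[k] P) →ₗ[k] (Fin n → P) :=
    (LinearEquiv.piRing k P (Fin n) k).toLinearMap ∘ₗ LinearMap.lcomp k P p with hDdef
  have hD : ∀ (f : H →ₗ[k] P) (j : Fin n), D f j = f (p (Pi.single j 1)) := fun f j => rfl
  have hDinj : Function.Injective D := by
    intro f g hfg
    have h1 : (LinearMap.lcomp k P p) f = (LinearMap.lcomp k P p) g :=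
      (LinearEquiv.piRing k P (Fin n) k).injective hfg
    have hcomp : f ∘ₗ p = g ∘ₗ p := h1
    have hf : f = (f ∘ₗ p) ∘ₗ σ := by
      rw [LinearMap.comp_assoc, hσ, LinearMap.comp_id]
    have hg : g = (g ∘ₗ p) ∘ₗ σ := by
      rw [LinearMap.comp_assoc, hσ, LinearMap.comp_id]
    rw [hf, hg, hcomp]
  suffices hw : (LinearMap.lTensor H D) ((LinearMap.lTensor H β) t₁)
      = (LinearMap.lTensor H D) ((LinearMap.lTensor H β) t₂) by
    exact Module.Flat.lTensor_preserves_injective_linearMap (M := H) D hDinj hw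
  have hpiinj : Function.Injective (TensorProduct.piRightHom k k H (fun _ : Fin n => P)) := by
    intro u v huv
    apply (TensorProduct.piRight k k H (fun _ : Fin n => P)).injective
    rwa [TensorProduct.piRight_apply, TensorProduct.piRight_apply]
  apply hpiinj
  funext j
  have hcompmap : ∀ t : H ⊗[k] H,
      TensorProduct.piRightHom k k H (fun _ : Fin n => P)
        ((LinearMap.lTensor H D) ((LinearMap.lTensor H β) t)) j
      = (LinearMap.lTensor H (ψ ∘ₗ LinearMap.mulRight k (p (Pi.single j 1)))) t := by
    intro t
    induction t using TensorProduct.induction_on with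
    | zero => simp
    | tmul u v =>
        simp only [LinearMap.lTensor_tmul, TensorProduct.piRightHom_tmul, LinearMap.comp_apply,
          LinearMap.mulRight_apply]
        rfl
    | add s t hs ht => simp [map_add, hs, ht]
  rw [hcompmap t₁, hcompmap t₂, h (p (Pi.single j 1))]

include hint hS1 hS2 in
lemma N_id (hFrob : Function.Bijective fun a : H => ψ ∘ₗ LinearMap.mulRight k a)
    (ν : H ≃ₐ[k] H) (hν : ∀ x a : H, ψ (x * a) = ψ (ν a * x))
    (a : H) (ra : Coalgebra.Repr k a (H × H)) (rn : Coalgebra.Repr k (ν a) (H × H)) :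
    ∑ j ∈ ra.index, Sb' (ra.left j) ⊗ₜ[k] ν (ra.right j)
      = ∑ m ∈ rn.index, HopfAlgebra.antipode (R := k) (rn.left m) ⊗ₜ[k] rn.right m := by
  apply injective_step ψ hint hFrob ν hν
  intro x
  simp only [map_sum, LinearMap.lTensor_tmul, LinearMap.comp_apply, LinearMap.mulRight_apply]
  calc ∑ j ∈ ra.index, Sb' (ra.left j) ⊗ₜ[k] ψ (ν (ra.right j) * x)
      = ∑ j ∈ ra.index, Sb' (ra.left j) ⊗ₜ[k] ψ (x * ra.right j) := by
        exact Finset.sum_congr rfl fun j _ => by rw [← hν x (ra.right j)]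
    _ = ∑ i ∈ (ℛ k x).index, (ℛ k x).left i ⊗ₜ[k] ψ ((ℛ k x).right i * a) :=
        C_id ψ hint Sb' hS2 x a (ℛ k x) ra
    _ = ∑ m ∈ rn.index, HopfAlgebra.antipode (R := k) (rn.left m) ⊗ₜ[k] ψ (rn.right m * x) :=
        A_id ψ hint ν hν x a (ℛ k x) rn

end Frobenius

/-! ### the `m ⇀ ·` operator -/

lemma W_repr (ν : H ≃ₐ[k] H) {b : H} (r : Coalgebra.Repr k b (H × H)) :
    (TensorProduct.rid k H)
      ((LinearMap.lTensor H (Coalgebra.counit ∘ₗ ν.toLinearMap)) (Coalgebra.comul (R := k) b))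
      = ∑ i ∈ r.index, Coalgebra.counit (R := k) (ν (r.right i)) • r.left i := by
  rw [← r.eq, map_sum, map_sum]
  simp

end NakayamaProofAux

open NakayamaProofAux Coalgebra HopfAlgebra in
/-- Formula for the Nakayama automorphism of a finitely generated projective Hopf algebra:
if `ψ : H → P` is the Frobenius homomorphism (left-integral-like, i.e.
`Σ a₍₁₎ ⊗ ψ(a₍₂₎) = 1 ⊗ ψ(a)`), `ν` its Nakayama automorphism, `m = ε ∘ ν` the left
modular function and `S̄ = S⁻¹`, then `ν(a) = S̄²(m ⇀ a) = m ⇀ S̄²(a)` where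
`m ⇀ a = Σ a₍₁₎ m(a₍₂₎)`. -/
theorem nakayama_formula (k H P : Type*) [CommRing k] [Ring H] [HopfAlgebra k H]
    [Module.Finite k H] [Module.Projective k H]
    [AddCommGroup P] [Module k P]
    (ψ : H →ₗ[k] P)
    (hFrob : Function.Bijective (fun a : H => ψ ∘ₗ LinearMap.mulRight k a))
    (hint : ∀ a : H, (LinearMap.lTensor H ψ) (Coalgebra.comul (R := k) a) = 1 ⊗ₜ[k] ψ a)
    (ν : H ≃ₐ[k] H)
    (hν : ∀ x a : H, ψ (x * a) = ψ (ν a * x))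
    (Sb : H → H)
    (hSb : ∀ x : H, HopfAlgebra.antipode (R := k) (Sb x) = x ∧
      Sb (HopfAlgebra.antipode (R := k) x) = x)
    (a : H) :
    ν a = Sb (Sb ((TensorProduct.rid k H)
        ((LinearMap.lTensor H (Coalgebra.counit (R := k) ∘ₗ ν.toLinearMap))
          (Coalgebra.comul (R := k) a)))) ∧
    ν a = (TensorProduct.rid k H)
        ((LinearMap.lTensor H (Coalgebra.counit (R := k) ∘ₗ ν.toLinearMap))
          (Coalgebra.comul (R := k) (Sb (Sb a)))) := by
  classical
  -- set up the inverse antipode as a linear map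
  have hSbij : Function.Bijective (HopfAlgebra.antipode (R := k) (A := H)) := by
    constructor
    · intro x y hxy
      rw [← (hSb x).2, hxy, (hSb y).2]
    · intro y
      exact ⟨Sb y, (hSb y).1⟩
  set Se : H ≃ₗ[k] H := LinearEquiv.ofBijective _ hSbij with hSe
  have hSecoe : ∀ x : H, Se x = HopfAlgebra.antipode (R := k) x := fun _ => rfl
  set T : H →ₗ[k] H := Se.symm.toLinearMap with hT
  have hS1 : ∀ x : H, HopfAlgebra.antipode (R := k) (T x) = x := by
    intro x
    have : Se (Se.symm x) = x := Se.apply_symm_apply x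
    rwa [hSecoe] at this
  have hS2 : ∀ x : H, T (HopfAlgebra.antipode (R := k) x) = x := by
    intro x
    have : Se.symm (Se x) = x := Se.symm_apply_apply x
    rwa [hSecoe] at this
  have hSbeq : ∀ x : H, Sb x = T x := by
    intro x
    apply hSbij.injective
    rw [(hSb x).1, hS1]
  -- the first formula
  set r := ℛ k a with hr
  set rn := ℛ k (ν a) with hrn
  have hN := N_id ψ hint T hS1 hS2 hFrob ν hν a r rn
  have h1 := congrArg (fun t : H ⊗[k] H =>
    (TensorProduct.rid k H) ((LinearMap.lTensor H (Coalgebra.counit (R := k) (A := H))) t)) hN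
  simp only [map_sum, LinearMap.lTensor_tmul, TensorProduct.rid_tmul] at h1
  -- h1 : ∑ j, ε (ν (r.right j)) • T (r.left j) = ∑ m, ε (rn.right m) • S (rn.left m)
  have hLeft : ∑ j ∈ r.index, Coalgebra.counit (R := k) (ν (r.right j)) • T (r.left j)
      = T ((TensorProduct.rid k H)
        ((LinearMap.lTensor H (Coalgebra.counit (R := k) ∘ₗ ν.toLinearMap))
          (Coalgebra.comul (R := k) a))) := by
    rw [W_repr ν r, map_sum]
    exact Finset.sum_congr rfl fun j _ => (map_smul T _ _).symm
  have hRight : ∑ m ∈ rn.index, Coalgebra.counit (R := k) (rn.right m) •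
      HopfAlgebra.antipode (R := k) (rn.left m) = HopfAlgebra.antipode (R := k) (ν a) := by
    have : ∑ m ∈ rn.index, Coalgebra.counit (R := k) (rn.right m) •
        HopfAlgebra.antipode (R := k) (rn.left m)
        = HopfAlgebra.antipode (R := k)
            (∑ m ∈ rn.index, Coalgebra.counit (R := k) (rn.right m) • rn.left m) := by
      rw [map_sum]
      exact Finset.sum_congr rfl fun m _ => (map_smul _ _ _).symm
    rw [this, repr_sum_smul_counit_left rn]
  set W : H := (TensorProduct.rid k H)
      ((LinearMap.lTensor H (Coalgebra.counit (R := k) ∘ₗ ν.toLinearMap))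
        (Coalgebra.comul (R := k) a)) with hW
  have hTW : T W = HopfAlgebra.antipode (R := k) (ν a) := by
    rw [← hLeft, ← hRight]
    exact h1
  have goal1 : T (T W) = ν a := by
    rw [hTW, hS2]
  constructor
  · rw [hSbeq, hSbeq, goal1]
  · -- second formula
    have hr' : (∑ i ∈ r.index, T (r.right i) ⊗ₜ[k] T (r.left i))
        = Coalgebra.comul (R := k) (T a) := (comul_Sb T hS1 hS2 r).symm
    have hr'' : (∑ i ∈ r.index, T (T (r.left i)) ⊗ₜ[k] T (T (r.right i)))
        = Coalgebra.comul (R := k) (T (T a)) :=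
      (comul_Sb T hS1 hS2
        (⟨r.index, fun i => T (r.right i), fun i => T (r.left i), hr'⟩ : Coalgebra.Repr k (T a) (H × H))).symm
    have hW2 : (TensorProduct.rid k H)
        ((LinearMap.lTensor H (Coalgebra.counit (R := k) ∘ₗ ν.toLinearMap))
          (Coalgebra.comul (R := k) (T (T a)))) = T (T W) := by
      have hWr : (TensorProduct.rid k H)
          ((LinearMap.lTensor H (Coalgebra.counit (R := k) ∘ₗ ν.toLinearMap))
            (Coalgebra.comul (R := k) (T (T a))))
          = ∑ i ∈ r.index,
              Coalgebra.counit (R := k) (ν (T (T (r.right i)))) • T (T (r.left i)) :=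
        W_repr ν (⟨r.index, fun i => T (T (r.left i)), fun i => T (T (r.right i)),
          hr''⟩ : Coalgebra.Repr k (T (T a)) (H × H))
      rw [hWr]
      have hterm : ∀ i ∈ r.index,
          Coalgebra.counit (R := k) (ν (T (T (r.right i)))) • T (T (r.left i))
          = T (T (Coalgebra.counit (R := k) (ν (r.right i)) • r.left i)) := by
        intro i _
        have hm := m_SbSb ν T hS1 hS2 (r.right i)
        simp only [mf_apply, LinearMap.comp_apply, AlgEquiv.toLinearMap_apply] at hm
        rw [hm, map_smul, map_smul]
      rw [Finset.sum_congr rfl hterm, ← map_sum, ← map_sum]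
      congr 1
      congr 1
      rw [W_repr ν r] at hW
      exact hW.symm
    rw [hSbeq, hSbeq, hW2, goal1]
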